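/- Let 2 < p < ∞ with conjugate q, let f'' : ℝ → ℝ be bounded and Lipschitz (with constant ‖f⁽³⁾‖_∞), ω ∈ L^p(ℝᵈ) ∩ L^q(ℝᵈ), and let (uₙ) ⊂ Lᵖ(ℝᵈ) converge to u in Lᵖ. Then the bilinear operators Bₙ(h,v) = μ ω∗[(f''(uₙ) − f''(u)) h v] converge to zero in the norm of bounded bilinear maps Lᵖ(ℝᵈ)² → Lᵖ(ℝᵈ): specifically, if ‖uₙ − u‖_p ≤ ε then ‖Bₙ‖ ≤ μ(‖f⁽³⁾‖_∞‖ω‖_q + 2‖f''‖_∞‖ω‖_p) max(√ε, (√ε)^{p−2}). -/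

import Mathlib

open Real Filter MeasureTheory
open scoped Convolution ENNReal NNReal

variable {d : ℕ}

lemma lint_sub_left (f : (Fin d → ℝ) → ℝ≥0∞) (x : Fin d → ℝ) :
    ∫⁻ t, f (x - t) = ∫⁻ t, f t := by
  have := lintegral_map_equiv (μ := (volume : Measure (Fin d → ℝ))) f
    (MeasurableEquiv.subLeft x)
  rw [show ⇑(MeasurableEquiv.subLeft x) = fun t => x - t from rfl,
    Measure.map_sub_left_eq_self volume x] at this
  exact this.symm

lemma lint_sub_right (f : (Fin d → ℝ) → ℝ≥0∞) (t : Fin d → ℝ) :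
    ∫⁻ x, f (x - t) = ∫⁻ x, f x :=
  lintegral_sub_right_eq_self f t

lemma mp_sub_left (x : Fin d → ℝ) :
    MeasurePreserving (fun t => x - t) (volume : Measure (Fin d → ℝ)) volume :=
  Measure.measurePreserving_sub_left volume x

lemma qmp_sub : Measure.QuasiMeasurePreserving (fun z : (Fin d → ℝ) × (Fin d → ℝ) => z.1 - z.2)
    ((volume : Measure (Fin d → ℝ)).prod volume) volume :=
  quasiMeasurePreserving_sub volume volume

lemma aemeas_lint_right {α β : Type*} [MeasurableSpace α] [MeasurableSpace β]
    {μ : Measure α} {μ' : Measure β} [SFinite μ'] {f : α × β → ℝ≥0∞}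
    (hf : AEMeasurable f (μ.prod μ')) :
    AEMeasurable (fun x => ∫⁻ y, f (x, y) ∂μ') μ := by
  refine ⟨fun x => ∫⁻ y, hf.mk f (x, y) ∂μ', hf.measurable_mk.lintegral_prod_right', ?_⟩
  filter_upwards [Measure.ae_ae_of_ae_prod hf.ae_eq_mk] with x hx
  exact lintegral_congr_ae hx

/-- Young's convolution inequality, `ℝ≥0∞`-lintegral form. -/
lemma young {d : ℕ} (W F : (Fin d → ℝ) → ℝ≥0∞) (hW : AEMeasurable W volume)
    (hF : AEMeasurable F volume) {p q r : ℝ} (hq : 0 < q) (hr : 0 < r)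
    (hqp : q ≤ p) (hrp : r ≤ p) (hqr : 1 / q + 1 / r = 1 + 1 / p) :
    ∫⁻ x, (∫⁻ t, W t * F (x - t)) ^ p ≤
      (∫⁻ t, W t ^ q) ^ (p / q) * (∫⁻ t, F t ^ r) ^ (p / r) := by
  have hp : 0 < p := hq.trans_le hqp
  set a : ℝ := 1 / p with ha_def
  set b : ℝ := 1 / q - 1 / p with hb_def
  set c : ℝ := 1 / r - 1 / p with hc_def
  have ha : 0 ≤ a := by positivity
  have hb : 0 ≤ b := sub_nonneg.2 (one_div_le_one_div_of_le hq hqp)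
  have hc : 0 ≤ c := sub_nonneg.2 (one_div_le_one_div_of_le hr hrp)
  have habc : a + b + c = 1 := by
    have h1 : 1 / q + 1 / r = 1 + 1 / p := hqr
    simp only [ha_def, hb_def, hc_def]; linarith
  have hab : q * (a + b) = 1 := by
    have : a + b = 1 / q := by simp only [ha_def, hb_def]; ring
    rw [this]; field_simp
  have hac : r * (a + c) = 1 := by
    have : a + c = 1 / r := by simp only [ha_def, hc_def]; ring
    rw [this]; field_simp
  set X : ℝ≥0∞ := ∫⁻ t, W t ^ q with hX
  set Y : ℝ≥0∞ := ∫⁻ t, F t ^ r with hY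
  have hWq : AEMeasurable (fun t => W t ^ q) (volume : Measure (Fin d → ℝ)) := hW.pow_const q
  have hFr : AEMeasurable (fun t => F t ^ r) (volume : Measure (Fin d → ℝ)) := hF.pow_const r
  -- pointwise Hölder in `t`
  have key : ∀ x : Fin d → ℝ,
      (∫⁻ t, W t * F (x - t)) ≤ (∫⁻ t, W t ^ q * F (x - t) ^ r) ^ a * X ^ b * Y ^ c := by
    intro x
    have hFx : AEMeasurable (fun t => F (x - t)) (volume : Measure (Fin d → ℝ)) :=
      hF.comp_quasiMeasurePreserving (mp_sub_left x).quasiMeasurePreserving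
    have hid : ∀ t : Fin d → ℝ, W t * F (x - t) =
        (W t ^ q * F (x - t) ^ r) ^ a * (W t ^ q) ^ b * (F (x - t) ^ r) ^ c := by
      intro t
      rw [ENNReal.mul_rpow_of_nonneg _ _ ha, ← ENNReal.rpow_mul, ← ENNReal.rpow_mul,
        ← ENNReal.rpow_mul, ← ENNReal.rpow_mul]
      calc W t * F (x - t) = W t ^ (q * a + q * b) * F (x - t) ^ (r * a + r * c) := by
            rw [show q * a + q * b = 1 by rw [← mul_add]; exact hab,
              show r * a + r * c = 1 by rw [← mul_add]; exact hac]
            simp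
        _ = _ := by
            rw [ENNReal.rpow_add_of_nonneg _ _ (by positivity) (by positivity),
              ENNReal.rpow_add_of_nonneg _ _ (by positivity) (by positivity)]
            ring
    calc (∫⁻ t, W t * F (x - t))
        = ∫⁻ t, (W t ^ q * F (x - t) ^ r) ^ a * (W t ^ q) ^ b * (F (x - t) ^ r) ^ c := by
          exact lintegral_congr fun t => hid t
      _ ≤ (∫⁻ t, W t ^ q * F (x - t) ^ r) ^ a * (∫⁻ t, W t ^ q) ^ b * (∫⁻ t, F (x - t) ^ r) ^ c := by
          have h3 := ENNReal.lintegral_prod_norm_pow_le (μ := (volume : Measure (Fin d → ℝ)))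
            (Finset.univ : Finset (Fin 3))
            (f := ![fun t => W t ^ q * F (x - t) ^ r, fun t => W t ^ q,
              fun t => F (x - t) ^ r])
            (fun i _ => by
              fin_cases i
              · exact (hWq.mul (hFx.pow_const r))
              · exact hWq
              · exact hFx.pow_const r)
            (p := ![a, b, c])
            (by simp [Fin.sum_univ_three, habc])
            (fun i _ => by fin_cases i <;> assumption)
          simpa [Fin.prod_univ_three] using h3
      _ = (∫⁻ t, W t ^ q * F (x - t) ^ r) ^ a * X ^ b * Y ^ c := by
          rw [lint_sub_left (fun z => F z ^ r) x, ← hX, ← hY]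
  have hprod : AEMeasurable (fun z : (Fin d → ℝ) × (Fin d → ℝ) => W z.2 ^ q * F (z.1 - z.2) ^ r)
      ((volume : Measure (Fin d → ℝ)).prod volume) := by
    have h1 : AEMeasurable (fun z : (Fin d → ℝ) × (Fin d → ℝ) => W z.2 ^ q)
        ((volume : Measure (Fin d → ℝ)).prod volume) :=
      hWq.comp_quasiMeasurePreserving Measure.quasiMeasurePreserving_snd
    have h2 : AEMeasurable (fun z : (Fin d → ℝ) × (Fin d → ℝ) => F (z.1 - z.2) ^ r)
        ((volume : Measure (Fin d → ℝ)).prod volume) :=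
      hFr.comp_quasiMeasurePreserving qmp_sub
    exact h1.mul h2
  have hA : AEMeasurable (fun x => ∫⁻ t, W t ^ q * F (x - t) ^ r)
      (volume : Measure (Fin d → ℝ)) := aemeas_lint_right hprod
  have tonelli : (∫⁻ x, ∫⁻ t, W t ^ q * F (x - t) ^ r) = X * Y := by
    rw [lintegral_lintegral_swap hprod]
    have inner : ∀ t : Fin d → ℝ, (∫⁻ x, W t ^ q * F (x - t) ^ r) = W t ^ q * Y := by
      intro t
      have hFxt : AEMeasurable (fun x : Fin d → ℝ => F (x - t) ^ r)
          (volume : Measure (Fin d → ℝ)) :=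
        hFr.comp_quasiMeasurePreserving
          (measurePreserving_sub_right (volume : Measure (Fin d → ℝ)) t).quasiMeasurePreserving
      rw [lintegral_const_mul'' _ hFxt, lint_sub_right (fun z => F z ^ r) t, ← hY]
    rw [lintegral_congr inner, lintegral_mul_const'' _ hWq, ← hX]
  have hbp : p / q = 1 + b * p := by
    rw [hb_def]; field_simp; ring
  have hcp : p / r = 1 + c * p := by
    rw [hc_def]; field_simp; ring
  calc ∫⁻ x, (∫⁻ t, W t * F (x - t)) ^ p
      ≤ ∫⁻ x, ((∫⁻ t, W t ^ q * F (x - t) ^ r) ^ a * X ^ b * Y ^ c) ^ p :=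
        lintegral_mono fun x => ENNReal.rpow_le_rpow (key x) hp.le
    _ = ∫⁻ x, (∫⁻ t, W t ^ q * F (x - t) ^ r) * (X ^ (b * p) * Y ^ (c * p)) := by
        apply lintegral_congr; intro x
        rw [ENNReal.mul_rpow_of_nonneg _ _ hp.le, ENNReal.mul_rpow_of_nonneg _ _ hp.le,
          ← ENNReal.rpow_mul, ← ENNReal.rpow_mul, ← ENNReal.rpow_mul,
          show a * p = 1 by rw [ha_def]; field_simp, ENNReal.rpow_one, mul_assoc]
    _ = (∫⁻ x, ∫⁻ t, W t ^ q * F (x - t) ^ r) * (X ^ (b * p) * Y ^ (c * p)) :=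
        lintegral_mul_const'' _ hA
    _ = (X * Y) * (X ^ (b * p) * Y ^ (c * p)) := by rw [tonelli]
    _ = X ^ (p / q) * Y ^ (p / r) := by
        rw [hbp, hcp, ENNReal.rpow_add_of_nonneg _ _ zero_le_one (by positivity),
          ENNReal.rpow_add_of_nonneg _ _ zero_le_one (by positivity),
          ENNReal.rpow_one, ENNReal.rpow_one]
        ring


lemma pull_const {X : Type*} [MeasurableSpace X] {μ : Measure X} (c : ℝ≥0∞) (hc : c ≠ ⊤)
    (f : X → ℝ≥0∞) {p : ℝ} (hp : 0 < p) :
    (∫⁻ x, (c * f x) ^ p ∂μ) ^ (1 / p) = c * (∫⁻ x, f x ^ p ∂μ) ^ (1 / p) := by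
  simp_rw [ENNReal.mul_rpow_of_nonneg _ _ hp.le]
  rw [lintegral_const_mul' _ _ (ENNReal.rpow_ne_top_of_nonneg hp.le hc),
    ENNReal.mul_rpow_of_nonneg _ _ (by positivity), ← ENNReal.rpow_mul,
    mul_one_div_cancel hp.ne', ENNReal.rpow_one]

lemma cs_half {X : Type*} [MeasurableSpace X] {μ : Measure X} {H V : X → ℝ≥0∞}
    (hH : AEMeasurable H μ) (hV : AEMeasurable V μ) {p : ℝ} (hp : 0 < p) :
    ∫⁻ y, (H y * V y) ^ (p / 2) ∂μ ≤
      (∫⁻ y, H y ^ p ∂μ) ^ (1 / 2 : ℝ) * (∫⁻ y, V y ^ p ∂μ) ^ (1 / 2 : ℝ) := by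
  have h22 : (2 : ℝ).HolderConjugate 2 := by
    rw [Real.holderConjugate_iff]; constructor
    · norm_num
    · norm_num
  have := ENNReal.lintegral_mul_le_Lp_mul_Lq μ h22
    (hH.pow_const (p / 2)) (hV.pow_const (p / 2))
  simp only [Pi.mul_apply] at this
  calc ∫⁻ y, (H y * V y) ^ (p / 2) ∂μ
      = ∫⁻ y, H y ^ (p / 2) * V y ^ (p / 2) ∂μ := by
        apply lintegral_congr; intro y; rw [ENNReal.mul_rpow_of_nonneg _ _ (by positivity)]
    _ ≤ (∫⁻ y, (H y ^ (p / 2)) ^ (2 : ℝ) ∂μ) ^ (1 / 2 : ℝ) *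
        (∫⁻ y, (V y ^ (p / 2)) ^ (2 : ℝ) ∂μ) ^ (1 / 2 : ℝ) := this
    _ = (∫⁻ y, H y ^ p ∂μ) ^ (1 / 2 : ℝ) * (∫⁻ y, V y ^ p ∂μ) ^ (1 / 2 : ℝ) := by
        congr 1 <;>
        · congr 1; apply lintegral_congr; intro y
          rw [← ENNReal.rpow_mul, div_mul_cancel₀]; norm_num


theorem stmt11 {d : ℕ} (p q : ℝ) (hp : 2 < p) (hpq : 1 / p + 1 / q = 1)
    (μ : ℝ) (hμ : 0 < μ)
    (f2 : ℝ → ℝ) (C2 : ℝ) (hf2b : ∀ s, |f2 s| ≤ C2) (K : ℝ≥0) (hf2lip : LipschitzWith K f2)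
    (ω : (Fin d → ℝ) → ℝ)
    (hωp : MemLp ω (ENNReal.ofReal p) (volume : Measure (Fin d → ℝ)))
    (hωq : MemLp ω (ENNReal.ofReal q) (volume : Measure (Fin d → ℝ)))
    (u u' : (Fin d → ℝ) → ℝ)
    (hu : MemLp u (ENNReal.ofReal p) (volume : Measure (Fin d → ℝ)))
    (hu' : MemLp u' (ENNReal.ofReal p) (volume : Measure (Fin d → ℝ)))
    (ε : ℝ) (hε : 0 < ε)
    (hclose : eLpNorm (u' - u) (ENNReal.ofReal p) volume ≤ ENNReal.ofReal ε) :
    ∀ h v : (Fin d → ℝ) → ℝ,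
      MemLp h (ENNReal.ofReal p) (volume : Measure (Fin d → ℝ)) →
      MemLp v (ENNReal.ofReal p) (volume : Measure (Fin d → ℝ)) →
      eLpNorm
        (fun x => μ * (ω ⋆[ContinuousLinearMap.mul ℝ ℝ, volume]
          fun y => (f2 (u' y) - f2 (u y)) * h y * v y) x)
        (ENNReal.ofReal p) volume ≤
      ENNReal.ofReal (μ * ((K : ℝ) * (eLpNorm ω (ENNReal.ofReal q) volume).toReal +
          2 * C2 * (eLpNorm ω (ENNReal.ofReal p) volume).toReal) *
          max (Real.sqrt ε) (Real.sqrt ε ^ (p - 2))) *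
        eLpNorm h (ENNReal.ofReal p) volume * eLpNorm v (ENNReal.ofReal p) volume := by
  intro h v hh hv
  -- basic exponent facts
  have hp0 : 0 < p := by linarith
  have hC2 : 0 ≤ C2 := le_trans (abs_nonneg _) (hf2b 0)
  have hq0 : 0 < q := by
    have h1 : 1 / q = 1 - 1 / p := by linarith
    have h2 : (0 : ℝ) < 1 / q := by
      rw [h1]; have : 1 / p < 1 := by
        rw [div_lt_one hp0]; linarith
      linarith
    exact one_div_pos.mp h2
  have hqp : q ≤ p := by
    have h1 : 1 / p ≤ 1 / q := by
      have : 1 / q = 1 - 1 / p := by linarith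
      rw [this]
      have : 2 / p ≤ 1 := by rw [div_le_one hp0]; linarith
      have h2p : 2 / p = 1 / p + 1 / p := by ring
      linarith
    rw [div_le_div_iff₀ hp0 hq0] at h1
    linarith
  -- notation
  set P := ENNReal.ofReal p with hP
  set Q := ENNReal.ofReal q with hQ
  have hP0 : P ≠ 0 := (ENNReal.ofReal_pos.2 hp0).ne'
  have hPt : P ≠ ⊤ := ENNReal.ofReal_ne_top
  have hQ0 : Q ≠ 0 := (ENNReal.ofReal_pos.2 hq0).ne'
  have hQt : Q ≠ ⊤ := ENNReal.ofReal_ne_top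
  have elp : ∀ (g : (Fin d → ℝ) → ℝ) (s : ℝ), 0 < s →
      eLpNorm g (ENNReal.ofReal s) volume = (∫⁻ t, (‖g t‖₊ : ℝ≥0∞) ^ s) ^ (1 / s) := by
    intro g s hs
    rw [eLpNorm_eq_lintegral_rpow_enorm_toReal (ENNReal.ofReal_pos.2 hs).ne' ENNReal.ofReal_ne_top,
      ENNReal.toReal_ofReal hs.le]
    rfl
  set W : (Fin d → ℝ) → ℝ≥0∞ := fun t => (‖ω t‖₊ : ℝ≥0∞) with hWdef
  set H : (Fin d → ℝ) → ℝ≥0∞ := fun t => (‖h t‖₊ : ℝ≥0∞) with hHdef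
  set V : (Fin d → ℝ) → ℝ≥0∞ := fun t => (‖v t‖₊ : ℝ≥0∞) with hVdef
  set D : (Fin d → ℝ) → ℝ≥0∞ := fun t => (‖f2 (u' t) - f2 (u t)‖₊ : ℝ≥0∞) with hDdef
  have hWm : AEMeasurable W (volume : Measure (Fin d → ℝ)) := hωp.aestronglyMeasurable.enorm
  have hHm : AEMeasurable H (volume : Measure (Fin d → ℝ)) := hh.aestronglyMeasurable.enorm
  have hVm : AEMeasurable V (volume : Measure (Fin d → ℝ)) := hv.aestronglyMeasurable.enorm
  -- the exceptional set
  have hdm : AEMeasurable (fun y => u' y - u y) (volume : Measure (Fin d → ℝ)) :=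
    (hu'.aestronglyMeasurable.aemeasurable.sub hu.aestronglyMeasurable.aemeasurable)
  set E₀ : Set (Fin d → ℝ) := {y | Real.sqrt ε < |u' y - u y|} with hE₀def
  have hE₀nm : NullMeasurableSet E₀ (volume : Measure (Fin d → ℝ)) := by
    have : E₀ = (fun y => u' y - u y) ⁻¹' {x : ℝ | Real.sqrt ε < |x|} := rfl
    rw [this]
    exact hdm.nullMeasurable (measurableSet_lt measurable_const measurable_abs)
  obtain ⟨E, hE₀E, hEm, hEae⟩ := hE₀nm.exists_measurable_superset_ae_eq
  set ind : (Fin d → ℝ) → ℝ≥0∞ := E.indicator 1 with hinddef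
  have hindm : AEMeasurable ind (volume : Measure (Fin d → ℝ)) :=
    (measurable_one.indicator hEm).aemeasurable
  set c₁ : ℝ≥0∞ := (K : ℝ≥0∞) * ENNReal.ofReal (Real.sqrt ε) with hc₁def
  set c₂ : ℝ≥0∞ := ENNReal.ofReal (2 * C2) with hc₂def
  have hc₁t : c₁ ≠ ⊤ := by
    simp [hc₁def, ENNReal.mul_ne_top, ENNReal.coe_ne_top, ENNReal.ofReal_ne_top]
  have hc₂t : c₂ ≠ ⊤ := ENNReal.ofReal_ne_top
  -- pointwise bound on D
  have hDle : ∀ y, D y ≤ c₁ + c₂ * ind y := by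
    intro y
    have hDy : D y = ENNReal.ofReal |f2 (u' y) - f2 (u y)| := by
      simp only [hDdef, ← enorm_eq_nnnorm, ← ofReal_norm, Real.norm_eq_abs]
    by_cases hy : y ∈ E₀
    · have hyE : y ∈ E := hE₀E hy
      have hind : ind y = 1 := by rw [hinddef]; simp [Set.indicator_of_mem hyE]
      rw [hind, mul_one]
      have hb : |f2 (u' y) - f2 (u y)| ≤ 2 * C2 := by
        calc |f2 (u' y) - f2 (u y)| ≤ |f2 (u' y)| + |f2 (u y)| := abs_sub _ _
          _ ≤ C2 + C2 := add_le_add (hf2b _) (hf2b _)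
          _ = 2 * C2 := by ring
      calc D y ≤ c₂ := by rw [hDy, hc₂def]; exact ENNReal.ofReal_le_ofReal hb
        _ ≤ c₁ + c₂ := le_add_self
    · have hy' : |u' y - u y| ≤ Real.sqrt ε := not_lt.mp hy
      have hb : |f2 (u' y) - f2 (u y)| ≤ (K : ℝ) * Real.sqrt ε := by
        have hl := hf2lip.dist_le_mul (u' y) (u y)
        rw [Real.dist_eq, Real.dist_eq] at hl
        calc |f2 (u' y) - f2 (u y)| ≤ (K : ℝ) * |u' y - u y| := hl
          _ ≤ (K : ℝ) * Real.sqrt ε := mul_le_mul_of_nonneg_left hy' K.2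
      have hc₁eq : c₁ = ENNReal.ofReal ((K : ℝ) * Real.sqrt ε) := by
        rw [hc₁def, ENNReal.ofReal_mul K.coe_nonneg, ENNReal.ofReal_coe_nnreal]
      calc D y ≤ c₁ := by
            rw [hDy, hc₁eq]; exact ENNReal.ofReal_le_ofReal hb
        _ ≤ c₁ + c₂ * ind y := le_self_add
  -- the two integrand pieces
  set F₁ : (Fin d → ℝ) → ℝ≥0∞ := fun y => H y * V y with hF₁def
  set F₂ : (Fin d → ℝ) → ℝ≥0∞ := fun y => ind y * (H y * V y) with hF₂def
  have hF₁m : AEMeasurable F₁ (volume : Measure (Fin d → ℝ)) := hHm.mul hVm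
  have hF₂m : AEMeasurable F₂ (volume : Measure (Fin d → ℝ)) := hindm.mul (hHm.mul hVm)
  set J₁ : (Fin d → ℝ) → ℝ≥0∞ := fun x => ∫⁻ t, W t * F₁ (x - t) with hJ₁def
  set J₂ : (Fin d → ℝ) → ℝ≥0∞ := fun x => ∫⁻ t, W t * F₂ (x - t) with hJ₂def
  have hJm : ∀ (F : (Fin d → ℝ) → ℝ≥0∞), AEMeasurable F (volume : Measure (Fin d → ℝ)) →
      AEMeasurable (fun x => ∫⁻ t, W t * F (x - t)) (volume : Measure (Fin d → ℝ)) := by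
    intro F hF
    exact aemeas_lint_right (f := fun z : (Fin d → ℝ) × (Fin d → ℝ) => W z.2 * F (z.1 - z.2))
      ((hWm.comp_quasiMeasurePreserving Measure.quasiMeasurePreserving_snd).mul
        (hF.comp_quasiMeasurePreserving qmp_sub))
  have hJ₁m := hJm F₁ hF₁m
  have hJ₂m := hJm F₂ hF₂m
  -- pointwise bound on the convolution
  have hconv : ∀ x : Fin d → ℝ,
      (‖μ * (ω ⋆[ContinuousLinearMap.mul ℝ ℝ, volume]
          fun y => (f2 (u' y) - f2 (u y)) * h y * v y) x‖₊ : ℝ≥0∞) ≤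
        ENNReal.ofReal μ * (c₁ * J₁ x + c₂ * J₂ x) := by
    intro x
    have hWFx : ∀ (F : (Fin d → ℝ) → ℝ≥0∞), AEMeasurable F (volume : Measure (Fin d → ℝ)) →
        AEMeasurable (fun t => W t * F (x - t)) (volume : Measure (Fin d → ℝ)) := fun F hF =>
      hWm.mul (hF.comp_quasiMeasurePreserving (mp_sub_left x).quasiMeasurePreserving)
    have hgle : ∀ t : Fin d → ℝ,
        (‖ω t * ((f2 (u' (x - t)) - f2 (u (x - t))) * h (x - t) * v (x - t))‖₊ : ℝ≥0∞)
          ≤ c₁ * (W t * F₁ (x - t)) + c₂ * (W t * F₂ (x - t)) := by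
      intro t
      have heq : (‖ω t * ((f2 (u' (x - t)) - f2 (u (x - t))) * h (x - t) * v (x - t))‖₊ : ℝ≥0∞)
          = W t * (D (x - t) * (H (x - t) * V (x - t))) := by
        rw [hWdef, hDdef, hHdef, hVdef]
        push_cast [nnnorm_mul]
        ring
      rw [heq]
      calc W t * (D (x - t) * (H (x - t) * V (x - t)))
          ≤ W t * ((c₁ + c₂ * ind (x - t)) * (H (x - t) * V (x - t))) :=
            mul_le_mul_right (mul_le_mul_left (hDle _) _) _
        _ = c₁ * (W t * F₁ (x - t)) + c₂ * (W t * F₂ (x - t)) := by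
            rw [hF₁def, hF₂def]; ring
    calc (‖μ * (ω ⋆[ContinuousLinearMap.mul ℝ ℝ, volume]
            fun y => (f2 (u' y) - f2 (u y)) * h y * v y) x‖₊ : ℝ≥0∞)
        = ENNReal.ofReal μ * (‖(ω ⋆[ContinuousLinearMap.mul ℝ ℝ, volume]
            fun y => (f2 (u' y) - f2 (u y)) * h y * v y) x‖₊ : ℝ≥0∞) := by
          rw [nnnorm_mul, ENNReal.coe_mul, ← enorm_eq_nnnorm, Real.enorm_eq_ofReal hμ.le]
      _ ≤ ENNReal.ofReal μ * (∫⁻ t, (c₁ * (W t * F₁ (x - t)) + c₂ * (W t * F₂ (x - t)))) := by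
          apply mul_le_mul_right
          rw [convolution_def]
          refine le_trans (enorm_integral_le_lintegral_enorm _)
            (lintegral_mono fun t => ?_)
          simpa [ContinuousLinearMap.mul_apply', enorm_eq_nnnorm] using hgle t
      _ = ENNReal.ofReal μ * (c₁ * J₁ x + c₂ * J₂ x) := by
          rw [lintegral_add_left' ((hWFx F₁ hF₁m).const_mul c₁),
            lintegral_const_mul'' c₁ (hWFx F₁ hF₁m), lintegral_const_mul'' c₂ (hWFx F₂ hF₂m),
            hJ₁def, hJ₂def]
  
  have hp1 : 1 ≤ p := by linarith
  -- abbreviations for the norms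
  set Nh : ℝ≥0∞ := (∫⁻ y, H y ^ p) ^ (1 / p) with hNhdef
  set Nv : ℝ≥0∞ := (∫⁻ y, V y ^ p) ^ (1 / p) with hNvdef
  set Nwp : ℝ≥0∞ := (∫⁻ t, W t ^ p) ^ (1 / p) with hNwpdef
  set Nwq : ℝ≥0∞ := (∫⁻ t, W t ^ q) ^ (1 / q) with hNwqdef
  set Sx : ℝ≥0∞ := ENNReal.ofReal (Real.sqrt ε ^ (p - 2)) with hSxdef
  set Mx : ℝ≥0∞ := ENNReal.ofReal (max (Real.sqrt ε) (Real.sqrt ε ^ (p - 2))) with hMxdef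
  -- step 1 : pass to the lintegral bound
  have step1 : eLpNorm
      (fun x => μ * (ω ⋆[ContinuousLinearMap.mul ℝ ℝ, volume]
        fun y => (f2 (u' y) - f2 (u y)) * h y * v y) x) P volume ≤
      ENNReal.ofReal μ * ((∫⁻ x, (c₁ * J₁ x + c₂ * J₂ x) ^ p) ^ (1 / p)) := by
    rw [hP, elp _ p hp0]
    calc (∫⁻ x, (‖μ * (ω ⋆[ContinuousLinearMap.mul ℝ ℝ, volume]
            fun y => (f2 (u' y) - f2 (u y)) * h y * v y) x‖₊ : ℝ≥0∞) ^ p) ^ (1 / p)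
        ≤ (∫⁻ x, (ENNReal.ofReal μ * (c₁ * J₁ x + c₂ * J₂ x)) ^ p) ^ (1 / p) :=
          ENNReal.rpow_le_rpow
            (lintegral_mono fun x => ENNReal.rpow_le_rpow (hconv x) hp0.le) (by positivity)
      _ = ENNReal.ofReal μ * ((∫⁻ x, (c₁ * J₁ x + c₂ * J₂ x) ^ p) ^ (1 / p)) :=
          pull_const _ ENNReal.ofReal_ne_top _ hp0
  -- step 2 : triangle inequality in L^p
  have step2 : (∫⁻ x, (c₁ * J₁ x + c₂ * J₂ x) ^ p) ^ (1 / p) ≤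
      c₁ * (∫⁻ x, J₁ x ^ p) ^ (1 / p) + c₂ * (∫⁻ x, J₂ x ^ p) ^ (1 / p) := by
    have htri := ENNReal.lintegral_Lp_add_le (μ := (volume : Measure (Fin d → ℝ)))
      (f := fun x => c₁ * J₁ x) (g := fun x => c₂ * J₂ x)
      (hJ₁m.const_mul c₁) (hJ₂m.const_mul c₂) hp1
    simp only [Pi.add_apply] at htri
    calc (∫⁻ x, (c₁ * J₁ x + c₂ * J₂ x) ^ p) ^ (1 / p)
        ≤ (∫⁻ x, (c₁ * J₁ x) ^ p) ^ (1 / p) + (∫⁻ x, (c₂ * J₂ x) ^ p) ^ (1 / p) := htri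
      _ = c₁ * (∫⁻ x, J₁ x ^ p) ^ (1 / p) + c₂ * (∫⁻ x, J₂ x ^ p) ^ (1 / p) := by
          rw [pull_const c₁ hc₁t _ hp0, pull_const c₂ hc₂t _ hp0]
  -- Cauchy-Schwarz piece
  have hCS : (∫⁻ y, F₁ y ^ (p / 2)) ^ (2 / p) ≤ Nh * Nv := by
    calc (∫⁻ y, F₁ y ^ (p / 2)) ^ (2 / p)
        ≤ ((∫⁻ y, H y ^ p) ^ (1 / 2 : ℝ) * (∫⁻ y, V y ^ p) ^ (1 / 2 : ℝ)) ^ (2 / p) :=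
          ENNReal.rpow_le_rpow (cs_half hHm hVm hp0) (by positivity)
      _ = Nh * Nv := by
          rw [ENNReal.mul_rpow_of_nonneg _ _ (by positivity), ← ENNReal.rpow_mul,
            ← ENNReal.rpow_mul, show (1 / 2 : ℝ) * (2 / p) = 1 / p by field_simp, hNhdef, hNvdef]
  -- Young piece 1
  have hy1 : (∫⁻ x, J₁ x ^ p) ^ (1 / p) ≤ Nwq * (Nh * Nv) := by
    have hhalf : (0 : ℝ) < p / 2 := by positivity
    have hYB := young W F₁ hWm hF₁m (p := p) (q := q) (r := p / 2) hq0 hhalf hqp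
      (by linarith)
      (by rw [one_div_div]
          have h2p : (2:ℝ)/p = 1/p + 1/p := by ring
          linarith)
    calc (∫⁻ x, J₁ x ^ p) ^ (1 / p)
        ≤ ((∫⁻ t, W t ^ q) ^ (p / q) * (∫⁻ t, F₁ t ^ (p / 2)) ^ (p / (p / 2))) ^ (1 / p) :=
          ENNReal.rpow_le_rpow hYB (by positivity)
      _ = Nwq * (∫⁻ t, F₁ t ^ (p / 2)) ^ (2 / p) := by
          rw [ENNReal.mul_rpow_of_nonneg _ _ (by positivity), ← ENNReal.rpow_mul,
            ← ENNReal.rpow_mul, show p / q * (1 / p) = 1 / q by field_simp,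
            show p / (p / 2) * (1 / p) = 2 / p by field_simp, hNwqdef]
      _ ≤ Nwq * (Nh * Nv) := mul_le_mul_right hCS _
  -- volume of the exceptional set
  have hsε0 : (0 : ℝ) < Real.sqrt ε := Real.sqrt_pos.2 hε
  have hoε0 : ENNReal.ofReal (Real.sqrt ε) ≠ 0 := (ENNReal.ofReal_pos.2 hsε0).ne'
  have hvolE : volume E ≤ ENNReal.ofReal (Real.sqrt ε) ^ p := by
    have hsub : E₀ ⊆ {y | ENNReal.ofReal (Real.sqrt ε) ≤ (‖(u' - u) y‖₊ : ℝ≥0∞)} := by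
      intro y hy
      simp only [Set.mem_setOf_eq, Pi.sub_apply]
      rw [← enorm_eq_nnnorm, ← ofReal_norm, Real.norm_eq_abs]
      exact ENNReal.ofReal_le_ofReal (le_of_lt hy)
    have hch := meas_ge_le_mul_pow_eLpNorm_enorm (μ := (volume : Measure (Fin d → ℝ))) hP0 hPt
      (hu'.sub hu).aestronglyMeasurable (ε := ENNReal.ofReal (Real.sqrt ε)) hoε0
      (fun h => absurd h ENNReal.ofReal_ne_top)
    calc volume E = volume E₀ := measure_congr hEae
      _ ≤ volume {y | ENNReal.ofReal (Real.sqrt ε) ≤ (‖(u' - u) y‖₊ : ℝ≥0∞)} :=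
          measure_mono hsub
      _ ≤ (ENNReal.ofReal (Real.sqrt ε))⁻¹ ^ p * eLpNorm (u' - u) P volume ^ p := by
          simpa [hP, ENNReal.toReal_ofReal hp0.le, Real.enorm_eq_ofReal_abs] using hch
      _ ≤ (ENNReal.ofReal (Real.sqrt ε))⁻¹ ^ p * (ENNReal.ofReal ε) ^ p :=
          mul_le_mul_right (ENNReal.rpow_le_rpow hclose hp0.le) _
      _ = ENNReal.ofReal (Real.sqrt ε) ^ p := by
          rw [← ENNReal.mul_rpow_of_nonneg _ _ hp0.le]
          congr 1
          rw [show ENNReal.ofReal ε = ENNReal.ofReal (Real.sqrt ε) * ENNReal.ofReal (Real.sqrt ε)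
              by rw [← ENNReal.ofReal_mul (Real.sqrt_nonneg ε), Real.mul_self_sqrt hε.le],
            ← mul_assoc, ENNReal.inv_mul_cancel hoε0 ENNReal.ofReal_ne_top, one_mul]
  -- indicator Hölder
  have hF₂int : (∫⁻ y, F₂ y) ≤ Sx * (Nh * Nv) := by
    have hconj : (p / (p - 2)).HolderConjugate (p / 2) := by
      rw [Real.holderConjugate_iff]; constructor
      · rw [lt_div_iff₀ (by linarith : (0:ℝ) < p - 2)]; linarith
      · rw [inv_div, inv_div]; field_simp; ring
    have hhold := ENNReal.lintegral_mul_le_Lp_mul_Lq (volume : Measure (Fin d → ℝ)) hconj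
      hindm (hHm.mul hVm)
    simp only [Pi.mul_apply] at hhold
    have hindpow : (∫⁻ y, ind y ^ (p / (p - 2))) = volume E := by
      rw [show (∫⁻ y, ind y ^ (p / (p - 2))) = ∫⁻ y, ind y from lintegral_congr fun y => ?_]
      · rw [hinddef, lintegral_indicator_one hEm]
      · by_cases hy : y ∈ E
        · simp [hinddef, Set.indicator_of_mem hy]
        · simp [hinddef, Set.indicator_of_notMem hy,
            ENNReal.zero_rpow_of_pos (div_pos (by linarith) (by linarith) : (0:ℝ) < p / (p - 2))]
    have hvolpow : (volume E) ^ (1 / (p / (p - 2))) ≤ Sx := by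
      calc (volume E) ^ (1 / (p / (p - 2)))
          ≤ (ENNReal.ofReal (Real.sqrt ε) ^ p) ^ (1 / (p / (p - 2))) :=
            ENNReal.rpow_le_rpow hvolE (le_of_lt (one_div_pos.2 (div_pos (by linarith) (by linarith))))
        _ = ENNReal.ofReal (Real.sqrt ε) ^ (p - 2) := by
            rw [← ENNReal.rpow_mul, one_div_div]
            congr 1
            field_simp
        _ = Sx := by rw [hSxdef, ENNReal.ofReal_rpow_of_pos hsε0]
    calc (∫⁻ y, F₂ y)
        ≤ (∫⁻ y, ind y ^ (p / (p - 2))) ^ (1 / (p / (p - 2))) *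
            (∫⁻ y, (H y * V y) ^ (p / 2)) ^ (1 / (p / 2)) := hhold
      _ = (volume E) ^ (1 / (p / (p - 2))) * (∫⁻ y, F₁ y ^ (p / 2)) ^ (2 / p) := by
          rw [hindpow, one_div_div, hF₁def]
          norm_num
      _ ≤ Sx * (Nh * Nv) := mul_le_mul' hvolpow hCS
  -- Young piece 2
  have hy2 : (∫⁻ x, J₂ x ^ p) ^ (1 / p) ≤ Nwp * (Sx * (Nh * Nv)) := by
    have hYA := young W F₂ hWm hF₂m (p := p) (q := p) (r := 1) hp0 one_pos le_rfl hp1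
      (by ring)
    have hF₂1 : (∫⁻ t, F₂ t ^ (1 : ℝ)) = ∫⁻ t, F₂ t :=
      lintegral_congr fun t => ENNReal.rpow_one _
    calc (∫⁻ x, J₂ x ^ p) ^ (1 / p)
        ≤ ((∫⁻ t, W t ^ p) ^ (p / p) * (∫⁻ t, F₂ t ^ (1 : ℝ)) ^ (p / 1)) ^ (1 / p) :=
          ENNReal.rpow_le_rpow hYA (by positivity)
      _ = Nwp * (∫⁻ t, F₂ t) := by
          rw [hF₂1, div_self hp0.ne', ENNReal.rpow_one, div_one,
            ENNReal.mul_rpow_of_nonneg _ _ (by positivity), ← ENNReal.rpow_mul,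
            mul_one_div_cancel hp0.ne', ENNReal.rpow_one, hNwpdef]
      _ ≤ Nwp * (Sx * (Nh * Nv)) := mul_le_mul_right hF₂int _
  -- rewriting the right-hand side
  have hωqe : eLpNorm ω Q volume = Nwq := by rw [hQ, elp ω q hq0, hNwqdef]
  have hωpe : eLpNorm ω P volume = Nwp := by rw [hP, elp ω p hp0, hNwpdef]
  have hNwq_ne : Nwq ≠ ⊤ := hωqe ▸ hωq.eLpNorm_ne_top
  have hNwp_ne : Nwp ≠ ⊤ := hωpe ▸ hωp.eLpNorm_ne_top
  have hRHS : ENNReal.ofReal (μ * ((K : ℝ) * (eLpNorm ω Q volume).toReal +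
        2 * C2 * (eLpNorm ω P volume).toReal) * max (Real.sqrt ε) (Real.sqrt ε ^ (p - 2)))
      = ENNReal.ofReal μ * ((((K : ℝ≥0∞) * Nwq + c₂ * Nwp) * Mx)) := by
    rw [ENNReal.ofReal_mul (by positivity), ENNReal.ofReal_mul hμ.le, mul_assoc]
    congr 1
    rw [← hMxdef]
    congr 1
    rw [ENNReal.ofReal_add (by positivity) (by positivity),
      ENNReal.ofReal_mul K.coe_nonneg, ENNReal.ofReal_mul (by positivity : (0:ℝ) ≤ 2 * C2),
      ENNReal.ofReal_coe_nnreal, ENNReal.ofReal_toReal (hωqe ▸ hNwq_ne),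
      ENNReal.ofReal_toReal (hωpe ▸ hNwp_ne), hωqe, hωpe, hc₂def]
  -- final assembly
  have hgoalh : eLpNorm h P volume = Nh := by rw [hP, elp h p hp0, hNhdef]
  have hgoalv : eLpNorm v P volume = Nv := by rw [hP, elp v p hp0, hNvdef]
  rw [hgoalh, hgoalv, hRHS]
  have hM1 : ENNReal.ofReal (Real.sqrt ε) ≤ Mx :=
    ENNReal.ofReal_le_ofReal (le_max_left _ _)
  have hM2 : Sx ≤ Mx := ENNReal.ofReal_le_ofReal (le_max_right _ _)
  calc eLpNorm (fun x => μ * (ω ⋆[ContinuousLinearMap.mul ℝ ℝ, volume]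
          fun y => (f2 (u' y) - f2 (u y)) * h y * v y) x) P volume
      ≤ ENNReal.ofReal μ * ((∫⁻ x, (c₁ * J₁ x + c₂ * J₂ x) ^ p) ^ (1 / p)) := step1
    _ ≤ ENNReal.ofReal μ * (c₁ * (∫⁻ x, J₁ x ^ p) ^ (1 / p) +
          c₂ * (∫⁻ x, J₂ x ^ p) ^ (1 / p)) := mul_le_mul_right step2 _
    _ ≤ ENNReal.ofReal μ * (c₁ * (Nwq * (Nh * Nv)) + c₂ * (Nwp * (Sx * (Nh * Nv)))) :=
        mul_le_mul_right (add_le_add (mul_le_mul_right hy1 c₁) (mul_le_mul_right hy2 c₂)) _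
    _ ≤ ENNReal.ofReal μ * (((K : ℝ≥0∞) * Nwq + c₂ * Nwp) * Mx) * Nh * Nv := by
        conv_rhs => rw [mul_assoc, mul_assoc]
        apply mul_le_mul_right
        calc c₁ * (Nwq * (Nh * Nv)) + c₂ * (Nwp * (Sx * (Nh * Nv)))
            = ((K : ℝ≥0∞) * Nwq * (Nh * Nv)) * ENNReal.ofReal (Real.sqrt ε) +
              (c₂ * Nwp * (Nh * Nv)) * Sx := by rw [hc₁def]; ring
          _ ≤ ((K : ℝ≥0∞) * Nwq * (Nh * Nv)) * Mx + (c₂ * Nwp * (Nh * Nv)) * Mx :=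
              add_le_add (mul_le_mul_right hM1 _) (mul_le_mul_right hM2 _)
          _ = ((K : ℝ≥0∞) * Nwq + c₂ * Nwp) * Mx * (Nh * Nv) := by ring
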